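/- Let α be an irrational real number with continued fraction expansion [a_0; a_1, a_2, …], and let (q_n)_{n≥0} be the denominators of the convergents to α. Then every non-negative integer n can be expressed uniquely as n = ∑_{0≤i≤ℓ} b_i q_i, where the b_i are integers satisfying: (i) 0 ≤ b_0 < a_1; (ii) 0 ≤ b_i ≤ a_{i+1} for i ≥ 1; and (iii) for i ≥ 1, if b_i = a_{i+1} then b_{i−1} = 0. -/

import Mathlib

noncomputable section


namespace OstrowskiAux

variable {a q : ℕ → ℕ}

/-- The Ostrowski digit conditions. -/
def Good (a : ℕ → ℕ) (b : ℕ →₀ ℕ) : Prop :=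
  b 0 < a 1 ∧ (∀ i : ℕ, 1 ≤ i → b i ≤ a (i + 1)) ∧
    (∀ i : ℕ, 1 ≤ i → b i = a (i + 1) → b (i - 1) = 0)

lemma digit_le (b : ℕ →₀ ℕ) (j : ℕ) (hj : b j ≠ 0) :
    q j ≤ b.sum fun i c => c * q i := by
  have hmem : j ∈ b.support := Finsupp.mem_support_iff.mpr hj
  calc q j = 1 * q j := (one_mul _).symm
  _ ≤ b j * q j := Nat.mul_le_mul_right _ (Nat.one_le_iff_ne_zero.mpr hj)
  _ ≤ b.sum fun i c => c * q i :=
      Finset.single_le_sum (f := fun i => b i * q i) (fun i _ => Nat.zero_le _) hmem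

lemma sum_eq_range (b : ℕ →₀ ℕ) (ℓ : ℕ) (hs : ∀ j, ℓ ≤ j → b j = 0) :
    (b.sum fun i c => c * q i) = ∑ i ∈ Finset.range ℓ, b i * q i := by
  apply Finsupp.sum_of_support_subset
  · intro j hj
    rw [Finset.mem_range]
    by_contra h
    exact (Finsupp.mem_support_iff.mp hj) (hs j (by omega))
  · intro i _; exact zero_mul _

lemma good_erase (ha1 : ∀ i, 1 ≤ a (i + 1)) (b : ℕ →₀ ℕ) (hg : Good a b) (ℓ : ℕ) :
    Good a (b.erase ℓ) := by
  obtain ⟨hb1, hb2, hb3⟩ := hg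
  refine ⟨?_, ?_, ?_⟩
  · rcases eq_or_ne ℓ 0 with rfl | h
    · rw [Finsupp.erase_same]; exact lt_of_le_of_lt (Nat.zero_le _) hb1
    · rw [Finsupp.erase_ne (Ne.symm h)]; exact hb1
  · intro i hi
    rcases eq_or_ne i ℓ with rfl | h
    · rw [Finsupp.erase_same]; exact Nat.zero_le _
    · rw [Finsupp.erase_ne h]; exact hb2 i hi
  · intro i hi hie
    rcases eq_or_ne i ℓ with rfl | h
    · rw [Finsupp.erase_same] at hie
      exact absurd hie.symm (by have := ha1 i; omega)
    · rw [Finsupp.erase_ne h] at hie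
      have := hb3 i hi hie
      rcases eq_or_ne (i-1) ℓ with he | h'
      · rw [he, Finsupp.erase_same]
      · rw [Finsupp.erase_ne h']; exact this

section Abstract

variable (h0 : q 0 = 1) (h1 : q 1 = a 1) (ha1 : ∀ i, 1 ≤ a (i + 1))
  (hrec : ∀ n, q (n + 2) = a (n + 2) * q (n + 1) + q n)

include h0 h1 ha1 hrec

lemma qpos : ∀ n, 1 ≤ q n := by
  intro n
  induction n using Nat.strong_induction_on with
  | _ n ih =>
    match n with
    | 0 => rw [h0]
    | 1 => rw [h1]; exact ha1 0
    | (n+2) =>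
      rw [hrec]
      exact le_trans (ih n (by omega)) (Nat.le_add_left _ _)

lemma qmono : Monotone q := by
  apply monotone_nat_of_le_succ
  intro n
  match n with
  | 0 => rw [h0, h1]; exact ha1 0
  | (n+1) =>
    rw [hrec]
    calc q (n+1) = 1 * q (n+1) := (one_mul _).symm
    _ ≤ a (n+2) * q (n+1) := Nat.mul_le_mul_right _ (ha1 (n+1))
    _ ≤ a (n+2) * q (n+1) + q n := Nat.le_add_right _ _

lemma qge : ∀ n, n ≤ q n := by
  intro n
  induction n using Nat.strong_induction_on with
  | _ n ih =>
    match n with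
    | 0 => exact Nat.zero_le _
    | 1 => rw [h1]; exact ha1 0
    | (n+2) =>
      rw [hrec]
      have h1' : n + 1 ≤ q (n+1) := ih (n+1) (by omega)
      have h2' : q (n+1) ≤ a (n+2) * q (n+1) := by
        calc q (n+1) = 1 * q (n+1) := (one_mul _).symm
        _ ≤ a (n+2) * q (n+1) := Nat.mul_le_mul_right _ (ha1 (n+1))
      have := qpos h0 h1 ha1 hrec n
      omega

/-- The key bound: a good digit string below `ℓ` sums to less than `q ℓ`. -/
lemma bound (b : ℕ →₀ ℕ) (hg : Good a b) :
    ∀ ℓ, ∑ i ∈ Finset.range ℓ, b i * q i < q ℓ := by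
  obtain ⟨hb1, hb2, hb3⟩ := hg
  intro ℓ
  induction ℓ using Nat.strong_induction_on with
  | _ ℓ ih =>
    match ℓ with
    | 0 => simp [h0]
    | 1 =>
      rw [Finset.sum_range_one, h0, h1, mul_one]
      exact hb1
    | (ℓ+2) =>
      rw [Finset.sum_range_succ, hrec]
      rcases eq_or_lt_of_le (hb2 (ℓ+1) (by omega)) with heq | hlt
      · have hz : b ℓ = 0 := hb3 (ℓ+1) (by omega) heq
        rw [heq, Finset.sum_range_succ, hz, zero_mul, add_zero, add_comm (a (ℓ+2) * q (ℓ+1))]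
        exact Nat.add_lt_add_right (ih ℓ (by omega)) _
      · have h1' : ∑ i ∈ Finset.range (ℓ+1), b i * q i < q (ℓ+1) := ih (ℓ+1) (by omega)
        calc ∑ i ∈ Finset.range (ℓ+1), b i * q i + b (ℓ+1) * q (ℓ+1)
            < q (ℓ+1) + b (ℓ+1) * q (ℓ+1) := Nat.add_lt_add_right h1' _
        _ = (b (ℓ+1) + 1) * q (ℓ+1) := by ring
        _ ≤ a (ℓ+2) * q (ℓ+1) := Nat.mul_le_mul_right _ hlt
        _ ≤ a (ℓ+2) * q (ℓ+1) + q ℓ := Nat.le_add_right _ _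

/-- Decomposition at the top digit of a nonzero good string. -/
lemma top_decomp (b : ℕ →₀ ℕ) (hg : Good a b) (hne : b ≠ 0) :
    ∃ L : ℕ, 1 ≤ b L ∧
      q L ≤ (b.sum fun i c => c * q i) ∧
      (b.sum fun i c => c * q i) < q (L + 1) ∧
      (b.sum fun i c => c * q i) =
        b L * q L + ((b.erase L).sum fun i c => c * q i) ∧
      ((b.erase L).sum fun i c => c * q i) < q L := by
  have hsupp : b.support.Nonempty := Finsupp.support_nonempty_iff.mpr hne
  refine ⟨b.support.max' hsupp, ?_, ?_, ?_, ?_, ?_⟩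
  · exact Nat.one_le_iff_ne_zero.mpr
      (Finsupp.mem_support_iff.mp (b.support.max'_mem hsupp))
  · exact digit_le b _ (Finsupp.mem_support_iff.mp (b.support.max'_mem hsupp))
  · have hsub : ∀ j, b.support.max' hsupp + 1 ≤ j → b j = 0 := by
      intro j hj
      by_contra hne'
      have := Finset.le_max' b.support j (Finsupp.mem_support_iff.mpr hne')
      omega
    rw [sum_eq_range b _ hsub]
    exact bound h0 h1 ha1 hrec b hg _
  · conv_lhs => rw [← Finsupp.single_add_erase (b.support.max' hsupp) b]
    rw [Finsupp.sum_add_index' (fun i => zero_mul (q i)) (fun i c d => add_mul c d (q i)),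
      Finsupp.sum_single_index (h := fun i c => c * q i) (zero_mul _)]
  · have hsub : ∀ j, b.support.max' hsupp ≤ j → (b.erase (b.support.max' hsupp)) j = 0 := by
      intro j hj
      rcases eq_or_lt_of_le hj with rfl | h
      · exact Finsupp.erase_same
      · rw [Finsupp.erase_ne (by omega)]
        by_contra hne'
        have := Finset.le_max' b.support j (Finsupp.mem_support_iff.mpr hne')
        omega
    rw [sum_eq_range _ _ hsub]
    have heq : ∑ i ∈ Finset.range (b.support.max' hsupp),
        (b.erase (b.support.max' hsupp)) i * q i =
        ∑ i ∈ Finset.range (b.support.max' hsupp), b i * q i := by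
      apply Finset.sum_congr rfl
      intro i hi
      rw [Finsupp.erase_ne (by rw [Finset.mem_range] at hi; omega)]
    rw [heq]
    exact bound h0 h1 ha1 hrec b hg _

/-- The greatest index `ℓ` with `q ℓ ≤ n`. -/
lemma exists_greatest (n : ℕ) (hn : 1 ≤ n) : ∃ ℓ, q ℓ ≤ n ∧ n < q (ℓ + 1) := by
  refine ⟨Nat.findGreatest (fun ℓ => q ℓ ≤ n) n, ?_, ?_⟩
  · exact Nat.findGreatest_spec (P := fun ℓ => q ℓ ≤ n) (m := 0) (Nat.zero_le n)
      (by show q 0 ≤ n; rw [h0]; exact hn)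
  · rcases le_or_gt (Nat.findGreatest (fun ℓ => q ℓ ≤ n) n + 1) n with h | h
    · by_contra hc
      have hng := Nat.findGreatest_is_greatest (P := fun ℓ => q ℓ ≤ n)
        (Nat.lt_succ_self (Nat.findGreatest (fun ℓ => q ℓ ≤ n) n)) h
      simp only [Nat.succ_eq_add_one] at hng
      exact hng (by omega)
    · have : n + 1 ≤ q (Nat.findGreatest (fun ℓ => q ℓ ≤ n) n + 1) :=
        le_trans h (qge h0 h1 ha1 hrec _)
      omega

/-- Existence. -/
lemma exists_good : ∀ n : ℕ, ∃ b : ℕ →₀ ℕ, (b.sum fun i c => c * q i) = n ∧ Good a b := by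
  intro n
  induction n using Nat.strong_induction_on with
  | _ n ih =>
    rcases Nat.eq_zero_or_pos n with rfl | hn
    · refine ⟨0, by simp, ?_, fun i hi => by simp, fun i hi h => ?_⟩
      · simpa using Nat.lt_of_lt_of_le Nat.zero_lt_one (ha1 0)
      · simp at h; exact absurd h.symm (by have := ha1 i; omega)
    · obtain ⟨ℓ, hℓle, hℓlt⟩ := exists_greatest h0 h1 ha1 hrec n hn
      rcases Nat.eq_zero_or_pos ℓ with rfl | hℓpos
      · refine ⟨Finsupp.single 0 n, by simp [h0], ?_, ?_, ?_⟩
        · rw [Finsupp.single_eq_same]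
          rw [h1] at hℓlt; exact hℓlt
        · intro i hi; rw [Finsupp.single_eq_of_ne (by omega)]; exact Nat.zero_le _
        · intro i hi h
          rw [Finsupp.single_eq_of_ne (by omega)] at h
          exact absurd h.symm (by have := ha1 i; omega)
      · obtain ⟨m, rfl⟩ : ∃ m, ℓ = m + 1 := ⟨ℓ - 1, by omega⟩
        have hℓlt2 : n < q (m+2) := hℓlt
        have hqpos := qpos h0 h1 ha1 hrec (m+1)
        set c := n / q (m+1) with hc
        set r := n % q (m+1) with hr
        have hdm : q (m+1) * c + r = n := Nat.div_add_mod n (q (m+1))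
        have hrlt : r < q (m+1) := Nat.mod_lt n hqpos
        have hrn : r < n := by omega
        obtain ⟨b', hb'sum, hb'good⟩ := ih r hrn
        have hz : ∀ j, m + 1 ≤ j → b' j = 0 := by
          intro j hj
          by_contra hne
          have h1'' := digit_le (q := q) b' j hne
          rw [hb'sum] at h1''
          have := qmono h0 h1 ha1 hrec hj
          omega
        have hcle : c ≤ a (m+2) := by
          have hq2 : q (m+2) = a (m+2) * q (m+1) + q m := hrec m
          have hqm : q m ≤ q (m+1) := qmono h0 h1 ha1 hrec (Nat.le_succ m)
          have hlt2 : n < (a (m+2) + 1) * q (m+1) := by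
            calc n < q (m+2) := hℓlt2
            _ = a (m+2) * q (m+1) + q m := hq2
            _ ≤ (a (m+2) + 1) * q (m+1) := by nlinarith
          have : n / q (m+1) < a (m+2) + 1 := (Nat.div_lt_iff_lt_mul hqpos).mpr hlt2
          omega
        refine ⟨b' + Finsupp.single (m+1) c, ?_, ?_, ?_, ?_⟩
        · rw [Finsupp.sum_add_index' (fun i => zero_mul (q i)) (fun i c d => add_mul c d (q i))]
          rw [hb'sum, Finsupp.sum_single_index (h := fun i c => c * q i) (zero_mul _),
            mul_comm]
          omega
        · rw [Finsupp.add_apply, Finsupp.single_eq_of_ne (by omega), add_zero]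
          exact hb'good.1
        · intro i hi
          rcases eq_or_ne i (m+1) with rfl | h
          · rw [Finsupp.add_apply, hz (m+1) le_rfl, Finsupp.single_eq_same, zero_add]
            exact hcle
          · rw [Finsupp.add_apply, Finsupp.single_eq_of_ne' (Ne.symm h), add_zero]
            exact hb'good.2.1 i hi
        · intro i hi hie
          rcases eq_or_ne i (m+1) with rfl | h
          · rw [Finsupp.add_apply, hz (m+1) le_rfl, Finsupp.single_eq_same, zero_add] at hie
            have hq2 : q (m+2) = a (m+2) * q (m+1) + q m := hrec m
            have hrqm : r < q m := by
              have hc2 : q (m+1) * c = q (m+1) * a (m+2) := by rw [hie]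
              have e2 : q (m+2) = q (m+1) * a (m+2) + q m := by rw [hq2, mul_comm]
              omega
            have hbm : b' m = 0 := by
              by_contra hne
              have h1'' := digit_le (q := q) b' m hne
              rw [hb'sum] at h1''
              omega
            simp only [Nat.add_sub_cancel, Finsupp.add_apply,
              Finsupp.single_eq_of_ne' (by omega : (m+1 : ℕ) ≠ m), add_zero]
            exact hbm
          · rw [Finsupp.add_apply, Finsupp.single_eq_of_ne' (Ne.symm h), add_zero] at hie
            rcases eq_or_ne (i - 1) (m+1) with he | h'
            · have hz' : b' i = 0 := hz i (by omega)
              exact absurd (hz' ▸ hie).symm (by have := ha1 i; omega)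
            · rw [Finsupp.add_apply, Finsupp.single_eq_of_ne' (Ne.symm h'), add_zero]
              exact hb'good.2.2 i hi hie

/-- Uniqueness. -/
lemma unique_good : ∀ n : ℕ, ∀ b b' : ℕ →₀ ℕ, Good a b → Good a b' →
    (b.sum fun i c => c * q i) = n → (b'.sum fun i c => c * q i) = n → b = b' := by
  intro n
  induction n using Nat.strong_induction_on with
  | _ n ih =>
    intro b b' hg hg' hs hs'
    rcases Nat.eq_zero_or_pos n with rfl | hn
    · have key : ∀ c : ℕ →₀ ℕ, (c.sum fun i k => k * q i) = 0 → c = 0 := by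
        intro c hc
        ext i
        by_contra hne
        have h1'' := digit_le (q := q) c i hne
        have := qpos h0 h1 ha1 hrec i
        omega
      rw [key b hs, key b' hs']
    · have hbne : b ≠ 0 := by
        intro h; rw [h] at hs; simp at hs; omega
      have hbne' : b' ≠ 0 := by
        intro h; rw [h] at hs'; simp at hs'; omega
      obtain ⟨L, hL1, hL2, hL3, hL4, hL5⟩ := top_decomp h0 h1 ha1 hrec b hg hbne
      obtain ⟨L', hL1', hL2', hL3', hL4', hL5'⟩ := top_decomp h0 h1 ha1 hrec b' hg' hbne'
      rw [hs] at hL2 hL3 hL4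
      rw [hs'] at hL2' hL3' hL4'
      have hLL : L = L' := by
        by_contra hne
        rcases Nat.lt_or_ge L L' with h | h
        · have := qmono h0 h1 ha1 hrec (show L + 1 ≤ L' by omega)
          omega
        · have := qmono h0 h1 ha1 hrec (show L' + 1 ≤ L by omega)
          omega
      subst hLL
      have hqLpos := qpos h0 h1 ha1 hrec L
      have htopeq : b L = b' L := by
        by_contra hne
        rcases Nat.lt_or_ge (b L) (b' L) with h | h
        · have hx : (b L + 1) * q L ≤ b' L * q L :=
            Nat.mul_le_mul_right _ (by omega)
          rw [add_one_mul] at hx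
          omega
        · have hx : (b' L + 1) * q L ≤ b L * q L :=
            Nat.mul_le_mul_right _ (by omega)
          rw [add_one_mul] at hx
          omega
      have hsumeq : ((b.erase L).sum fun i c => c * q i) =
          ((b'.erase L).sum fun i c => c * q i) := by
        rw [htopeq] at hL4; omega
      have hlt : ((b.erase L).sum fun i c => c * q i) < n := by
        have hx : 1 * 1 ≤ b L * q L := Nat.mul_le_mul hL1 hqLpos
        omega
      have herase := ih _ hlt (b.erase L) (b'.erase L)
        (good_erase ha1 b hg L) (good_erase ha1 b' hg' L) rfl hsumeq.symm
      ext i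
      rcases eq_or_ne i L with rfl | h
      · exact htopeq
      · have := DFunLike.congr_fun herase i
        rwa [Finsupp.erase_ne h, Finsupp.erase_ne h] at this
end Abstract

end OstrowskiAux

/-- **Ostrowski's theorem.** Let `α` be irrational with continued fraction
expansion `[a₀; a₁, a₂, …]` and let `(q i)` be the denominators of its
convergents.  Then every natural number `n` has a unique representation
`n = ∑ i, b i · q i` with `b 0 < a 1`, `b i ≤ a (i+1)` for `i ≥ 1`, and, for
`i ≥ 1`, `b i = a (i+1) → b (i-1) = 0`. -/
theorem ostrowski_representation (α : ℝ) (hα : Irrational α)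
    (a : ℕ → ℕ) (q : ℕ → ℕ)
    (ha : ∀ i : ℕ, (GenContFract.of α).partDens.get? i = some ((a (i + 1) : ℝ)))
    (hq : ∀ i : ℕ, ((q i : ℝ)) = (GenContFract.of α).dens i) :
    ∀ n : ℕ, ∃! b : ℕ →₀ ℕ,
      (b.sum fun i c => c * q i) = n ∧
      b 0 < a 1 ∧
      (∀ i : ℕ, 1 ≤ i → b i ≤ a (i + 1)) ∧
      (∀ i : ℕ, 1 ≤ i → b i = a (i + 1) → b (i - 1) = 0) := by
  have h0 : q 0 = 1 := by
    have := hq 0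
    rw [GenContFract.zeroth_den_eq_one] at this
    exact_mod_cast this
  have h1 : q 1 = a 1 := by
    obtain ⟨gp, hs, hb⟩ := GenContFract.exists_s_b_of_partDen (ha 0)
    have := hq 1
    rw [GenContFract.first_den_eq hs, hb] at this
    exact_mod_cast this
  have ha1 : ∀ i, 1 ≤ a (i + 1) := by
    intro i
    have := GenContFract.of_one_le_get?_partDen (ha i)
    exact_mod_cast this
  have hrec : ∀ n, q (n + 2) = a (n + 2) * q (n + 1) + q n := by
    intro n
    obtain ⟨gp, hs, hb⟩ := GenContFract.exists_s_b_of_partDen (ha (n + 1))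
    have hga : gp.a = 1 := GenContFract.of_partNum_eq_one (GenContFract.partNum_eq_s_a hs)
    have := GenContFract.dens_recurrence hs (hq n).symm (hq (n + 1)).symm
    rw [← hq (n + 2), hb, hga, one_mul] at this
    exact_mod_cast this
  intro n
  obtain ⟨b, hbsum, hbgood⟩ := OstrowskiAux.exists_good h0 h1 ha1 hrec n
  refine ⟨b, ⟨hbsum, hbgood.1, hbgood.2.1, hbgood.2.2⟩, ?_⟩
  rintro b' ⟨hb'sum, hb'1, hb'2, hb'3⟩
  exact OstrowskiAux.unique_good h0 h1 ha1 hrec n b' b ⟨hb'1, hb'2, hb'3⟩ hbgood hb'sum hbsum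

end
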